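/- A finite simple graph G is a permutation graph if and only if the following system of equations over GF(2), in variables β(v,w) indexed by ordered pairs of distinct vertices, has a solution: (a) β(v,w)+β(w,v)=1 for all distinct vertices v,w; (b) for all distinct vertices v,w,x with vw,vx ∉ E(G) and wx ∈ E(G), β(v,w)+β(v,x)=0; (c) for all distinct vertices v,w,x with vw,vx ∈ E(G) and wx ∉ E(G), β(v,w)+β(v,x)=0. -/

import Mathlib

/-- The permutation graph of a permutation `π` of `{0, …, n-1}`: `i` and `j` are adjacent
iff `i < j` and `π i > π j` (as an unordered condition). -/
def permutationGraph {n : ℕ} (π : Equiv.Perm (Fin n)) : SimpleGraph (Fin n) where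
  Adj i j := (i < j ∧ π j < π i) ∨ (j < i ∧ π i < π j)
  symm := ⟨fun _ _ h => Or.symm h⟩
  loopless := ⟨fun i h => by
    rcases h with ⟨h, _⟩ | ⟨h, _⟩ <;> exact lt_irrefl i h⟩

/-- `G` is a permutation graph: isomorphic to the graph of some permutation. -/
def IsPermutationGraph {V : Type*} (G : SimpleGraph V) : Prop :=
  ∃ (n : ℕ) (π : Equiv.Perm (Fin n)), Nonempty (G ≃g permutationGraph π)

namespace PGP

open SimpleGraph Relation

universe u
variable {V : Type*}

def CondA (β : V → V → ZMod 2) : Prop := ∀ v w : V, v ≠ w → β v w + β w v = 1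

def CondB (G : SimpleGraph V) (β : V → V → ZMod 2) : Prop :=
  ∀ v w x : V, v ≠ w → v ≠ x → w ≠ x → ¬ G.Adj v w → ¬ G.Adj v x → G.Adj w x →
    β v w + β v x = 0

def CondC (G : SimpleGraph V) (β : V → V → ZMod 2) : Prop :=
  ∀ v w x : V, v ≠ w → v ≠ x → w ≠ x → G.Adj v w → G.Adj v x → ¬ G.Adj w x →
    β v w + β v x = 0

def Sol (G : SimpleGraph V) (β : V → V → ZMod 2) : Prop := CondA β ∧ CondB G β ∧ CondC G β

open scoped Classical in
noncomputable def gam (G : SimpleGraph V) (β : V → V → ZMod 2) : V → V → ZMod 2 :=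
  fun v w => if G.Adj v w then β w v else β v w

def Tr (β : V → V → ZMod 2) : Prop :=
  ∀ a b c : V, a ≠ b → b ≠ c → a ≠ c → β a b = 1 → β b c = 1 → β a c = 1

lemma z2_cases (x : ZMod 2) : x = 0 ∨ x = 1 := by revert x; decide

lemma z2_add_zero {x y : ZMod 2} (h : x + y = 0) : x = y := by revert h; revert x y; decide

lemma z2_add_zero' {x y : ZMod 2} (h : x = y) : x + y = 0 := by revert h; revert x y; decide

lemma z2_flip {β : V → V → ZMod 2} (hA : CondA β) {v w : V} (h : v ≠ w) (h1 : β v w = 1) :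
    β w v = 0 := by
  have := hA v w h
  revert this h1; generalize β v w = a; generalize β w v = b; revert a b; decide

lemma z2_flip' {β : V → V → ZMod 2} (hA : CondA β) {v w : V} (h : v ≠ w) (h1 : β v w = 0) :
    β w v = 1 := by
  have := hA v w h
  revert this h1; generalize β v w = a; generalize β w v = b; revert a b; decide

lemma gam_adj {G : SimpleGraph V} {β : V → V → ZMod 2} {v w : V} (h : G.Adj v w) :
    gam G β v w = β w v := by simp [gam, h]

lemma gam_not_adj {G : SimpleGraph V} {β : V → V → ZMod 2} {v w : V} (h : ¬ G.Adj v w) :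
    gam G β v w = β v w := by simp [gam, h]

lemma condA_gam {G : SimpleGraph V} {β : V → V → ZMod 2} (hA : CondA β) : CondA (gam G β) := by
  intro v w hvw
  by_cases h : G.Adj v w
  · rw [gam_adj h, gam_adj h.symm]
    rw [add_comm]; exact hA v w hvw
  · rw [gam_not_adj h, gam_not_adj (fun hh => h hh.symm)]
    exact hA v w hvw

lemma sol_compl {G : SimpleGraph V} {β : V → V → ZMod 2} (hs : Sol G β) : Sol Gᶜ (gam G β) := by
  obtain ⟨hA, hB, hC⟩ := hs
  refine ⟨condA_gam hA, ?_, ?_⟩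
  · -- CondB for Gᶜ : non-adjacent in Gᶜ means adjacent in G (for distinct)
    intro v w x hvw hvx hwx hnvw hnvx hwxc
    have havw : G.Adj v w := by
      by_contra h; exact hnvw ((G.compl_adj v w).mpr ⟨hvw, h⟩)
    have havx : G.Adj v x := by
      by_contra h; exact hnvx ((G.compl_adj v x).mpr ⟨hvx, h⟩)
    have hnawx : ¬ G.Adj w x := ((G.compl_adj w x).mp hwxc).2
    rw [gam_adj havw, gam_adj havx]
    have h1 := hC v w x hvw hvx hwx havw havx hnawx
    have e1 := hA v w hvw
    have e2 := hA v x hvx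
    revert h1 e1 e2
    generalize β v w = a; generalize β w v = b; generalize β v x = c; generalize β x v = d
    revert a b c d; decide
  · intro v w x hvw hvx hwx hcvw hcvx hnwx
    have hnavw : ¬ G.Adj v w := ((G.compl_adj v w).mp hcvw).2
    have hnavx : ¬ G.Adj v x := ((G.compl_adj v x).mp hcvx).2
    have hawx : G.Adj w x := by
      by_contra h; exact hnwx ((G.compl_adj w x).mpr ⟨hwx, h⟩)
    rw [gam_not_adj hnavw, gam_not_adj hnavx]
    exact hB v w x hvw hvx hwx hnavw hnavx hawx


def Step (G : SimpleGraph V) (e f : V × V) : Prop :=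
  (e.1 = f.1 ∧ G.Adj e.1 e.2 ∧ G.Adj f.1 f.2 ∧ ¬ G.Adj e.2 f.2 ∧ e.2 ≠ f.2) ∨
  (e.2 = f.2 ∧ G.Adj e.1 e.2 ∧ G.Adj f.1 f.2 ∧ ¬ G.Adj e.1 f.1 ∧ e.1 ≠ f.1)

def SameC (G : SimpleGraph V) (e f : V × V) : Prop := Relation.ReflTransGen (Step G) e f

lemma step_symm {G : SimpleGraph V} : Symmetric (Step G) := by
  rintro e f (⟨h1, h2, h3, h4, h5⟩ | ⟨h1, h2, h3, h4, h5⟩)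
  · exact Or.inl ⟨h1.symm, h3, h2, fun h => h4 h.symm, h5.symm⟩
  · exact Or.inr ⟨h1.symm, h3, h2, fun h => h4 h.symm, h5.symm⟩

lemma SameC.symm {G : SimpleGraph V} {e f : V × V} (h : SameC G e f) : SameC G f e :=
  by
    haveI : Std.Symm (Step G) := ⟨fun _ _ h => step_symm h⟩
    exact (inferInstance : Std.Symm (ReflTransGen (Step G))).symm _ _ h

lemma SameC.trans' {G : SimpleGraph V} {e f g : V × V} (h : SameC G e f) (h' : SameC G f g) :
    SameC G e g := ReflTransGen.trans h h'

lemma step_adj {G : SimpleGraph V} {e f : V × V} (h : Step G e f) : G.Adj f.1 f.2 := by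
  rcases h with ⟨_, _, h, _, _⟩ | ⟨_, _, h, _, _⟩ <;> exact h

lemma sameC_adj {G : SimpleGraph V} {e f : V × V} (h : SameC G e f) (he : G.Adj e.1 e.2) :
    G.Adj f.1 f.2 := by
  induction h with
  | refl => exact he
  | tail _ h2 _ => exact step_adj h2

def swp (e : V × V) : V × V := (e.2, e.1)

lemma step_swp {G : SimpleGraph V} {e f : V × V} (h : Step G e f) : Step G (swp e) (swp f) := by
  rcases h with ⟨h1, h2, h3, h4, h5⟩ | ⟨h1, h2, h3, h4, h5⟩
  · exact Or.inr ⟨h1, h2.symm, h3.symm, h4, h5⟩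
  · exact Or.inl ⟨h1, h2.symm, h3.symm, h4, h5⟩

lemma sameC_swp {G : SimpleGraph V} {e f : V × V} (h : SameC G e f) :
    SameC G (swp e) (swp f) := by
  induction h with
  | refl => exact ReflTransGen.refl
  | tail _ h2 ih => exact ih.tail (step_swp h2)

lemma step_beta {G : SimpleGraph V} {β : V → V → ZMod 2} (hs : Sol G β) {e f : V × V}
    (h : Step G e f) : β e.1 e.2 = β f.1 f.2 := by
  obtain ⟨hA, hB, hC⟩ := hs
  rcases h with ⟨h1, h2, h3, h4, h5⟩ | ⟨h1, h2, h3, h4, h5⟩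
  · -- shared tail
    have := hC e.1 e.2 f.2 h2.ne (h1 ▸ h3.ne) h5 h2 (h1 ▸ h3) h4
    rw [← h1]
    exact z2_add_zero this
  · -- shared head: use CondC centered at the common head
    have hc := hC e.2 e.1 f.1 h2.ne' (h1 ▸ h3.ne') h5 h2.symm (h1 ▸ h3.symm) h4
    have heq : β e.2 e.1 = β e.2 f.1 := z2_add_zero hc
    have e1 := hA e.1 e.2 h2.ne
    have e2 := hA f.1 f.2 h3.ne
    rw [← h1] at e2
    rw [show f.2 = e.2 from h1.symm]
    revert heq e1 e2
    generalize β e.1 e.2 = a; generalize β e.2 e.1 = b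
    generalize β f.1 e.2 = c; generalize β e.2 f.1 = d
    revert a b c d; decide

lemma sameC_beta {G : SimpleGraph V} {β : V → V → ZMod 2} (hs : Sol G β) {e f : V × V}
    (h : SameC G e f) : β e.1 e.2 = β f.1 f.2 := by
  induction h with
  | refl => rfl
  | tail _ h2 ih => exact ih.trans (step_beta hs h2)

/-- The Triangle Lemma. -/
lemma TL {G : SimpleGraph V} {β : V → V → ZMod 2} (hs : Sol G β) {a b c : V}
    (hab : G.Adj a b) (hac : G.Adj a c)
    (H1 : ¬ SameC G (b, c) (a, c)) (H2 : ¬ SameC G (b, c) (b, a)) :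
    ∀ e, SameC G (b, c) e →
      a ≠ e.1 ∧ a ≠ e.2 ∧ G.Adj a e.1 ∧ G.Adj a e.2 ∧
      SameC G (a, b) (a, e.1) ∧ SameC G (a, c) (a, e.2) := by
  intro e h
  induction h with
  | refl =>
    exact ⟨hab.ne, hac.ne, hab, hac, ReflTransGen.refl, ReflTransGen.refl⟩
  | @tail e' e h1 h2 ih =>
    obtain ⟨ihu1, ihu2, ihadj1, ihadj2, ihs1, ihs2⟩ := ih
    have hcl : SameC G (b, c) e := h1.tail h2
    rcases h2 with ⟨g1, g2, g3, g4, g5⟩ | ⟨g1, g2, g3, g4, g5⟩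
    · -- shared tail: e.1 = e'.1
      -- we know things about e'; conclude for e = (e'.1, e.2)
      have hane2 : a ≠ e.2 := by
        intro haeq
        -- then e = (e.1, a), and (b,c) ~ (e.1, a); swap to get (c,b) ~ (a, e.1)
        have hsw : SameC G (c, b) (a, e.1) := by
          have := sameC_swp hcl
          simpa [swp, ← haeq] using this
        -- combined with SameC (a,b) (a,e.1) = SameC (a,b) (a, e'.1) ... e.1 = e'.1
        have hs1' : SameC G (a, b) (a, e.1) := g1 ▸ ihs1
        have : SameC G (a, b) (c, b) := hs1'.trans' hsw.symm
        have := sameC_swp this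
        simp only [swp] at this
        exact H2 this.symm
      have hadj2 : G.Adj a e.2 := by
        by_contra hna
        -- Step e (e.1, a)
        have hst : Step G e (e.1, a) := by
          refine Or.inl ⟨rfl, step_adj (Or.inl ⟨g1, g2, g3, g4, g5⟩), ?_, ?_, ?_⟩
          · exact (g1 ▸ ihadj1 : G.Adj a e.1).symm
          · exact fun h => hna h.symm
          · exact fun h => hane2 h.symm
        have hcl2 : SameC G (b, c) (e.1, a) := hcl.tail hst
        have hsw : SameC G (c, b) (a, e.1) := by
          have := sameC_swp hcl2
          simpa [swp] using this
        have hs1' : SameC G (a, b) (a, e.1) := g1 ▸ ihs1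
        have : SameC G (a, b) (c, b) := hs1'.trans' hsw.symm
        have := sameC_swp this
        simp only [swp] at this
        exact H2 this.symm
      refine ⟨g1 ▸ ihu1, hane2, g1 ▸ ihadj1, hadj2, g1 ▸ ihs1, ?_⟩
      · -- SameC (a,c) (a, e.2) via step (a, e'.2) → (a, e.2)
        refine ihs2.tail (Or.inl ⟨rfl, ihadj2, hadj2, g4, g5⟩)
    · -- shared head: e.2 = e'.2
      have hane1 : a ≠ e.1 := by
        intro haeq
        have hcl2 : SameC G (b, c) (a, e.2) := by rw [haeq]; exact hcl
        have hs2' : SameC G (a, c) (a, e.2) := g1 ▸ ihs2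
        exact H1 (hcl2.trans' hs2'.symm)
      have hadj1 : G.Adj a e.1 := by
        by_contra hna
        have hst : Step G e (a, e.2) := by
          refine Or.inr ⟨rfl, step_adj (Or.inr ⟨g1, g2, g3, g4, g5⟩), ?_, ?_, ?_⟩
          · exact (g1 ▸ ihadj2 : G.Adj a e.2)
          · exact fun h => hna h.symm
          · exact fun h => hane1 h.symm
        have hcl2 : SameC G (b, c) (a, e.2) := hcl.tail hst
        have hs2' : SameC G (a, c) (a, e.2) := g1 ▸ ihs2
        exact H1 (hcl2.trans' hs2'.symm)
      refine ⟨hane1, g1 ▸ ihu2, hadj1, g1 ▸ ihadj2, ?_, g1 ▸ ihs2⟩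
      · exact ihs1.tail (Or.inl ⟨rfl, ihadj1, hadj1, g4, g5⟩)

def IsModule (G : SimpleGraph V) (M : Set V) : Prop :=
  ∀ ⦃z⦄, z ∉ M → ∀ ⦃u⦄, u ∈ M → ∀ ⦃w⦄, w ∈ M → (G.Adj z u ↔ G.Adj z w)

def NoNontrivModule (G : SimpleGraph V) : Prop :=
  ∀ M : Set V, IsModule G M → (∃ u ∈ M, ∃ w ∈ M, u ≠ w) → M = Set.univ

def Mset (G : SimpleGraph V) (b c : V) : Set V :=
  {z | ∃ e, SameC G (b, c) e ∧ (z = e.1 ∨ z = e.2)}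

lemma b_mem_Mset {G : SimpleGraph V} {b c : V} : b ∈ Mset G b c :=
  ⟨(b, c), ReflTransGen.refl, Or.inl rfl⟩

lemma c_mem_Mset {G : SimpleGraph V} {b c : V} : c ∈ Mset G b c :=
  ⟨(b, c), ReflTransGen.refl, Or.inr rfl⟩

lemma edgeflip {G : SimpleGraph V} {b c z : V} (hbc : G.Adj b c) (hz : z ∉ Mset G b c)
    {e : V × V} (he : SameC G (b, c) e) : (G.Adj z e.1 ↔ G.Adj z e.2) := by
  have hadj : G.Adj e.1 e.2 := sameC_adj he hbc
  have hz1 : z ≠ e.1 := fun h => hz ⟨e, he, Or.inl h⟩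
  have hz2 : z ≠ e.2 := fun h => hz ⟨e, he, Or.inr h⟩
  constructor
  · intro h1
    by_contra h2
    have hst : Step G e (e.1, z) :=
      Or.inl ⟨rfl, hadj, h1.symm, fun h => h2 h.symm, fun h => hz2 h.symm⟩
    exact hz ⟨(e.1, z), he.tail hst, Or.inr rfl⟩
  · intro h1
    by_contra h2
    have hst : Step G e (z, e.2) :=
      Or.inr ⟨rfl, hadj, h1, fun h => h2 h.symm, fun h => hz1 h.symm⟩
    exact hz ⟨(z, e.2), he.tail hst, Or.inl rfl⟩

lemma mset_inv {G : SimpleGraph V} {b c z : V} (hbc : G.Adj b c) (hz : z ∉ Mset G b c) :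
    ∀ e, SameC G (b, c) e → (G.Adj z e.1 ↔ G.Adj z b) := by
  intro e h
  induction h with
  | refl => exact Iff.rfl
  | @tail e' e h1 h2 ih =>
    have hcl : SameC G (b, c) e := h1.tail h2
    rcases h2 with ⟨g1, _, _, _, _⟩ | ⟨g1, _, _, _, _⟩
    · rw [← g1]; exact ih
    · calc G.Adj z e.1 ↔ G.Adj z e.2 := edgeflip hbc hz hcl
        _ ↔ G.Adj z e'.2 := by rw [g1]
        _ ↔ G.Adj z e'.1 := (edgeflip hbc hz h1).symm
        _ ↔ G.Adj z b := ih

lemma mset_module {G : SimpleGraph V} {b c : V} (hbc : G.Adj b c) :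
    IsModule G (Mset G b c) := by
  intro z hz u hu w hw
  have key : ∀ y ∈ Mset G b c, (G.Adj z y ↔ G.Adj z b) := by
    rintro y ⟨e, he, hy | hy⟩
    · rw [hy]; exact mset_inv hbc hz e he
    · rw [hy]
      calc G.Adj z e.2 ↔ G.Adj z e.1 := (edgeflip hbc hz he).symm
        _ ↔ G.Adj z b := mset_inv hbc hz e he
  rw [key u hu, key w hw]

lemma module_compl {G : SimpleGraph V} {M : Set V} (h : IsModule G M) : IsModule Gᶜ M := by
  intro z hz u hu w hw
  have hzu : z ≠ u := fun hh => hz (hh ▸ hu)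
  have hzw : z ≠ w := fun hh => hz (hh ▸ hw)
  rw [G.compl_adj z u, G.compl_adj z w]
  rw [h hz hu hw]
  simp [hzu, hzw]

lemma noNontriv_compl {G : SimpleGraph V} (h : NoNontrivModule G) : NoNontrivModule Gᶜ := by
  intro M hM hnt
  apply h M _ hnt
  have := module_compl hM
  simpa using this

/-- Key prime-case lemma: no cyclically oriented triangle. -/
lemma prime_noCycTriangle {G : SimpleGraph V} {β : V → V → ZMod 2} (hs : Sol G β)
    (hp : NoNontrivModule G) {a b c : V}
    (hab : G.Adj a b) (hbc : G.Adj b c) (hac : G.Adj a c)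
    (h1 : β a b = 1) (h2 : β b c = 1) (h3 : β c a = 1) : False := by
  have hA := hs.1
  have hac0 : β a c = 0 := by
    have := z2_flip hA hac.ne.symm h3  -- β c a = 1, c ≠ a → β a c = 0
    exact this
  have hba0 : β b a = 0 := z2_flip hA hab.ne h1
  have H1 : ¬ SameC G (b, c) (a, c) := by
    intro h
    have := sameC_beta hs h
    simp only at this
    rw [h2, hac0] at this
    exact one_ne_zero this
  have H2 : ¬ SameC G (b, c) (b, a) := by
    intro h
    have := sameC_beta hs h
    simp only at this
    rw [h2, hba0] at this
    exact one_ne_zero this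
  have htl := TL hs hab hac H1 H2
  have huniv : Mset G b c = Set.univ := by
    apply hp _ (mset_module hbc)
    exact ⟨b, b_mem_Mset, c, c_mem_Mset, hbc.ne⟩
  have ha : a ∈ Mset G b c := by rw [huniv]; trivial
  obtain ⟨e, he, haa⟩ := ha
  obtain ⟨hne1, hne2, _, _, _, _⟩ := htl e he
  rcases haa with h | h
  · exact hne1 h
  · exact hne2 h

lemma z2_ne_contra {x y : ZMod 2} (h : x = y) (hx : x = 0) (hy : y = 1) : False := by
  subst h; rw [hx] at hy; exact absurd hy (by decide)

lemma prime_noCyc {G : SimpleGraph V} {β : V → V → ZMod 2} (hs : Sol G β)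
    (hp : NoNontrivModule G) {a b c : V} (hab' : a ≠ b) (hbc' : b ≠ c) (hac' : a ≠ c)
    (h1 : β a b = 1) (h2 : β b c = 1) (h3 : β c a = 1) : False := by
  obtain ⟨hA, hB, hC⟩ := hs
  have hba : β b a = 0 := z2_flip hA hab' h1
  have hcb : β c b = 0 := z2_flip hA hbc' h2
  have hac : β a c = 0 := z2_flip hA hac'.symm h3
  by_cases Hab : G.Adj a b <;> by_cases Hbc : G.Adj b c <;> by_cases Hac : G.Adj a c
  · exact prime_noCycTriangle ⟨hA, hB, hC⟩ hp Hab Hbc Hac h1 h2 h3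
  · -- E E ¬E : CondC at b with (a, c)
    have := hC b a c hab'.symm hbc' hac' Hab.symm Hbc (fun h => Hac h)
    exact z2_ne_contra (z2_add_zero this) hba h2
  · -- E ¬E E : CondC at a with (b, c)
    have := hC a b c hab' hac' hbc' Hab Hac (fun h => Hbc h)
    exact z2_ne_contra (z2_add_zero this).symm hac h1
  · -- E ¬E ¬E : CondB at c with (b, a)
    have := hB c b a hbc'.symm hac'.symm hab'.symm (fun h => Hbc h.symm) (fun h => Hac h.symm)
      Hab.symm
    exact z2_ne_contra (z2_add_zero this) hcb h3
  · -- ¬E E E : CondC at c with (b, a)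
    have := hC c b a hbc'.symm hac'.symm hab'.symm Hbc.symm Hac.symm (fun h => Hab h.symm)
    exact z2_ne_contra (z2_add_zero this) hcb h3
  · -- ¬E E ¬E : CondB at a with (b, c)
    have := hB a b c hab' hac' hbc' Hab Hac Hbc
    exact z2_ne_contra (z2_add_zero this).symm hac h1
  · -- ¬E ¬E E : CondB at b with (a, c)
    have := hB b a c hab'.symm hbc' hac' (fun h => Hab h.symm) Hbc Hac
    exact z2_ne_contra (z2_add_zero this) hba h2
  · -- ¬E ¬E ¬E : complement triangle
    have hsc : Sol Gᶜ (gam G β) := sol_compl ⟨hA, hB, hC⟩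
    have hpc : NoNontrivModule Gᶜ := noNontriv_compl hp
    have cab : Gᶜ.Adj a b := (G.compl_adj a b).mpr ⟨hab', Hab⟩
    have cbc : Gᶜ.Adj b c := (G.compl_adj b c).mpr ⟨hbc', Hbc⟩
    have cac : Gᶜ.Adj a c := (G.compl_adj a c).mpr ⟨hac', Hac⟩
    exact prime_noCycTriangle hsc hpc cab cbc cac
      (by rw [gam_not_adj Hab]; exact h1)
      (by rw [gam_not_adj Hbc]; exact h2)
      (by rw [gam_not_adj (fun h => Hac h.symm)]; exact h3)

lemma tr_of_noCyc {G : SimpleGraph V} {β : V → V → ZMod 2} (hs : Sol G β)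
    (hp : NoNontrivModule G) : Tr β := by
  intro x y z hxy hyz hxz h1 h2
  rcases z2_cases (β x z) with h | h
  · exfalso
    have h3 : β z x = 1 := z2_flip' hs.1 hxz h
    exact prime_noCyc hs hp hxy hyz hxz h1 h2 h3
  · exact h

section Glue

variable {M : Set V} {x₀ : V}

lemma memW_of_not_mem {u : V} (hu : u ∉ M) : u ∈ insert x₀ Mᶜ :=
  Set.mem_insert_of_mem _ hu

lemma x₀_memW : x₀ ∈ insert x₀ Mᶜ := Set.mem_insert _ _

open scoped Classical in
noncomputable def glue (M : Set V) (x₀ : V)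
    (bM : ↥M → ↥M → ZMod 2) (bW : ↥(insert x₀ Mᶜ) → ↥(insert x₀ Mᶜ) → ZMod 2) :
    V → V → ZMod 2 := fun u w =>
  if hu : u ∈ M then
    if hw : w ∈ M then bM ⟨u, hu⟩ ⟨w, hw⟩
    else bW ⟨x₀, x₀_memW⟩ ⟨w, memW_of_not_mem hw⟩
  else
    if hw : w ∈ M then bW ⟨u, memW_of_not_mem hu⟩ ⟨x₀, x₀_memW⟩
    else bW ⟨u, memW_of_not_mem hu⟩ ⟨w, memW_of_not_mem hw⟩

variable {bM : ↥M → ↥M → ZMod 2} {bW : ↥(insert x₀ Mᶜ) → ↥(insert x₀ Mᶜ) → ZMod 2}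

lemma glue_MM {u w : V} (hu : u ∈ M) (hw : w ∈ M) :
    glue M x₀ bM bW u w = bM ⟨u, hu⟩ ⟨w, hw⟩ := by simp [glue, hu, hw]

lemma glue_MW {u w : V} (hu : u ∈ M) (hw : w ∉ M) :
    glue M x₀ bM bW u w = bW ⟨x₀, x₀_memW⟩ ⟨w, memW_of_not_mem hw⟩ := by
  simp [glue, hu, hw]

lemma glue_WM {u w : V} (hu : u ∉ M) (hw : w ∈ M) :
    glue M x₀ bM bW u w = bW ⟨u, memW_of_not_mem hu⟩ ⟨x₀, x₀_memW⟩ := by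
  simp [glue, hu, hw]

lemma glue_WW {u w : V} (hu : u ∉ M) (hw : w ∉ M) :
    glue M x₀ bM bW u w = bW ⟨u, memW_of_not_mem hu⟩ ⟨w, memW_of_not_mem hw⟩ := by
  simp [glue, hu, hw]

lemma ne_subtype {s : Set V} {u w : V} (h : u ≠ w) (hu : u ∈ s) (hw : w ∈ s) :
    (⟨u, hu⟩ : ↥s) ≠ ⟨w, hw⟩ := fun hh => h (congrArg Subtype.val hh)

lemma condA_glue (hx : x₀ ∈ M) (haM : CondA bM) (haW : CondA bW) :
    CondA (glue M x₀ bM bW) := by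
  intro u w huw
  by_cases hu : u ∈ M <;> by_cases hw : w ∈ M
  · rw [glue_MM hu hw, glue_MM hw hu]
    exact haM _ _ (ne_subtype huw hu hw)
  · rw [glue_MW hu hw, glue_WM hw hu]
    exact haW _ _ (ne_subtype (fun hh : x₀ = w => hw (hh ▸ hx)) _ _)
  · rw [glue_WM hu hw, glue_MW hw hu]
    exact haW _ _ (ne_subtype (fun hh : u = x₀ => hu (hh ▸ hx)) _ _)
  · rw [glue_WW hu hw, glue_WW hw hu]
    exact haW _ _ (ne_subtype huw _ _)

lemma one_add_one_ne_one : ¬ ((1 : ZMod 2) + 1 = 1) := by decide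

lemma tr_glue (hx : x₀ ∈ M) (haW : CondA bW) (htM : Tr bM) (htW : Tr bW) :
    Tr (glue M x₀ bM bW) := by
  intro a b c hab hbc hac h1 h2
  by_cases ha : a ∈ M <;> by_cases hb : b ∈ M <;> by_cases hc : c ∈ M
  · rw [glue_MM ha hb] at h1; rw [glue_MM hb hc] at h2; rw [glue_MM ha hc]
    exact htM _ _ _ (ne_subtype hab ha hb) (ne_subtype hbc hb hc) (ne_subtype hac ha hc) h1 h2
  · -- a b ∈ M, c ∉ M : glue a c = glue b c = bW x₀ c
    rw [glue_MW hb hc] at h2; rw [glue_MW ha hc]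
    exact h2
  · -- a ∈ M, b ∉ M, c ∈ M : contradiction
    rw [glue_MW ha hb] at h1; rw [glue_WM hb hc] at h2
    exfalso
    have hne : (⟨x₀, x₀_memW⟩ : ↥(insert x₀ Mᶜ)) ≠ ⟨b, memW_of_not_mem hb⟩ :=
      ne_subtype (fun hh : x₀ = b => hb (hh ▸ hx)) _ _
    have := haW _ _ hne
    rw [h1, h2] at this
    exact one_add_one_ne_one this
  · -- a ∈ M, b ∉ M, c ∉ M
    rw [glue_MW ha hb] at h1; rw [glue_WW hb hc] at h2; rw [glue_MW ha hc]
    exact htW _ _ _ (ne_subtype (fun hh : x₀ = b => hb (hh ▸ hx)) _ _)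
      (ne_subtype hbc _ _) (ne_subtype (fun hh : x₀ = c => hc (hh ▸ hx)) _ _) h1 h2
  · -- a ∉ M, b ∈ M, c ∈ M
    rw [glue_WM ha hb] at h1; rw [glue_WM ha hc]
    exact h1
  · -- a ∉ M, b ∈ M, c ∉ M
    rw [glue_WM ha hb] at h1; rw [glue_MW hb hc] at h2; rw [glue_WW ha hc]
    exact htW _ _ _ (ne_subtype (fun hh : a = x₀ => ha (hh ▸ hx)) _ _)
      (ne_subtype (fun hh : x₀ = c => hc (hh ▸ hx)) _ _) (ne_subtype hac _ _) h1 h2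
  · -- a ∉ M, b ∉ M, c ∈ M
    rw [glue_WW ha hb] at h1; rw [glue_WM hb hc] at h2; rw [glue_WM ha hc]
    exact htW _ _ _ (ne_subtype hab _ _) (ne_subtype (fun hh : b = x₀ => hb (hh ▸ hx)) _ _)
      (ne_subtype (fun hh : a = x₀ => ha (hh ▸ hx)) _ _) h1 h2
  · rw [glue_WW ha hb] at h1; rw [glue_WW hb hc] at h2; rw [glue_WW ha hc]
    exact htW _ _ _ (ne_subtype hab _ _) (ne_subtype hbc _ _) (ne_subtype hac _ _) h1 h2

lemma gam_glue {G : SimpleGraph V} (hx : x₀ ∈ M) (hmod : IsModule G M) :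
    gam G (glue M x₀ bM bW) =
      glue M x₀ (gam (G.induce M) bM) (gam (G.induce (insert x₀ Mᶜ)) bW) := by
  funext u w
  by_cases hu : u ∈ M <;> by_cases hw : w ∈ M
  · rw [glue_MM hu hw]
    have hadj : G.Adj u w ↔ (G.induce M).Adj ⟨u, hu⟩ ⟨w, hw⟩ := by simp
    by_cases h : G.Adj u w
    · rw [gam_adj h, gam_adj (hadj.mp h), glue_MM hw hu]
    · rw [gam_not_adj h, gam_not_adj (fun hh => h (hadj.mpr hh)), glue_MM hu hw]
  · rw [glue_MW hu hw]
    have hmodadj : G.Adj u w ↔ G.Adj x₀ w := by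
      rw [G.adj_comm u w, G.adj_comm x₀ w]
      exact hmod hw hu hx
    have hadj : G.Adj x₀ w ↔ (G.induce (insert x₀ Mᶜ)).Adj ⟨x₀, x₀_memW⟩
        ⟨w, memW_of_not_mem hw⟩ := by simp
    by_cases h : G.Adj u w
    · rw [gam_adj h, gam_adj (hadj.mp (hmodadj.mp h)), glue_WM hw hu]
    · rw [gam_not_adj h, gam_not_adj (fun hh => h (hmodadj.mpr (hadj.mpr hh))),
        glue_MW hu hw]
  · rw [glue_WM hu hw]
    have hmodadj : G.Adj u w ↔ G.Adj u x₀ := hmod hu hw hx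
    have hadj : G.Adj u x₀ ↔ (G.induce (insert x₀ Mᶜ)).Adj ⟨u, memW_of_not_mem hu⟩
        ⟨x₀, x₀_memW⟩ := by simp
    by_cases h : G.Adj u w
    · rw [gam_adj h, gam_adj (hadj.mp (hmodadj.mp h)), glue_MW hw hu]
    · rw [gam_not_adj h, gam_not_adj (fun hh => h (hmodadj.mpr (hadj.mpr hh))),
        glue_WM hu hw]
  · rw [glue_WW hu hw]
    have hadj : G.Adj u w ↔ (G.induce (insert x₀ Mᶜ)).Adj ⟨u, memW_of_not_mem hu⟩
        ⟨w, memW_of_not_mem hw⟩ := by simp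
    by_cases h : G.Adj u w
    · rw [gam_adj h, gam_adj (hadj.mp h), glue_WW hw hu]
    · rw [gam_not_adj h, gam_not_adj (fun hh => h (hadj.mpr hh)), glue_WW hu hw]

end Glue

lemma sol_induce {G : SimpleGraph V} {β : V → V → ZMod 2} (hs : Sol G β) (s : Set V) :
    Sol (G.induce s) (fun a b => β a b) := by
  obtain ⟨hA, hB, hC⟩ := hs
  refine ⟨?_, ?_, ?_⟩
  · rintro ⟨v, hv⟩ ⟨w, hw⟩ hne
    exact hA v w (fun h => hne (Subtype.ext h))
  · rintro ⟨v, hv⟩ ⟨w, hw⟩ ⟨x, hx⟩ h1 h2 h3 h4 h5 h6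
    exact hB v w x (fun h => h1 (Subtype.ext h)) (fun h => h2 (Subtype.ext h))
      (fun h => h3 (Subtype.ext h)) (fun h => h4 (by simpa using h))
      (fun h => h5 (by simpa using h)) (by simpa using h6)
  · rintro ⟨v, hv⟩ ⟨w, hw⟩ ⟨x, hx⟩ h1 h2 h3 h4 h5 h6
    exact hC v w x (fun h => h1 (Subtype.ext h)) (fun h => h2 (Subtype.ext h))
      (fun h => h3 (Subtype.ext h)) (by simpa using h4) (by simpa using h5)
      (fun h => h6 (by simpa using h))

lemma key (n : ℕ) : ∀ {W : Type u} [Fintype W] [DecidableEq W] (G : SimpleGraph W)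
    (β : W → W → ZMod 2), Fintype.card W ≤ n → Sol G β →
    ∃ β', CondA β' ∧ Tr β' ∧ Tr (gam G β') := by
  induction n with
  | zero =>
    intro W _ _ G β hc _
    have he : IsEmpty W := Fintype.card_eq_zero_iff.mp (Nat.le_zero.mp hc)
    exact ⟨β, fun v => (he.false v).elim, fun v => (he.false v).elim,
      fun v => (he.false v).elim⟩
  | succ n ih =>
    intro W _ _ G β hc hs
    by_cases hM : ∃ M : Set W, IsModule G M ∧ (∃ u ∈ M, ∃ w ∈ M, u ≠ w) ∧ M ≠ Set.univ
    · obtain ⟨M, hmod, ⟨x₀, hx₀, w₀, hw₀, hxw⟩, hMne⟩ := hM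
      obtain ⟨z₀, hz₀⟩ := (Set.ne_univ_iff_exists_notMem M).mp hMne
      haveI : DecidablePred (· ∈ M) := Classical.decPred _
      haveI : DecidablePred (· ∈ insert x₀ Mᶜ) := Classical.decPred _
      have hcM : Fintype.card ↥M ≤ n := by
        have h2 : Fintype.card ↥M < Fintype.card W :=
          Fintype.card_lt_of_injective_of_notMem _ Subtype.val_injective
            (by rw [Subtype.range_val]; exact hz₀)
        omega
      have hcW : Fintype.card ↥(insert x₀ Mᶜ) ≤ n := by
        have hw₀n : w₀ ∉ insert x₀ Mᶜ := by
          intro h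
          rcases Set.mem_insert_iff.mp h with h | h
          · exact hxw h.symm
          · exact h hw₀
        have h2 : Fintype.card ↥(insert x₀ Mᶜ) < Fintype.card W :=
          Fintype.card_lt_of_injective_of_notMem _ Subtype.val_injective
            (by rw [Subtype.range_val]; exact hw₀n)
        omega
      obtain ⟨bM, haM, htM, hgM⟩ := ih (G.induce M) (fun a b => β a b) hcM (sol_induce hs M)
      obtain ⟨bW, haW, htW, hgW⟩ :=
        ih (G.induce (insert x₀ Mᶜ)) (fun a b => β a b) hcW (sol_induce hs _)
      refine ⟨glue M x₀ bM bW, condA_glue hx₀ haM haW, tr_glue hx₀ haW htM htW, ?_⟩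
      rw [gam_glue hx₀ hmod]
      exact tr_glue hx₀ (condA_gam haW) hgM hgW
    · have hp : NoNontrivModule G := by
        intro Mm hm hnt
        by_contra hne
        exact hM ⟨Mm, hm, hnt, hne⟩
      exact ⟨β, hs.1, tr_of_noCyc hs hp, tr_of_noCyc (sol_compl hs) (noNontriv_compl hp)⟩

lemma linear_of {W : Type*} [Fintype W] [DecidableEq W] {β : W → W → ZMod 2}
    (hA : CondA β) (hT : Tr β) :
    ∃ f : W → Fin (Fintype.card W), Function.Bijective f ∧
      ∀ u w, (u ≠ w ∧ β u w = 1) ↔ f u < f w := by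
  classical
  set r : W → W → Prop := fun u w => u ≠ w ∧ β u w = 1 with hr
  have hTot : ∀ u w, u ≠ w → r u w ∨ r w u := by
    intro u w hne
    rcases z2_cases (β u w) with h | h
    · exact Or.inr ⟨hne.symm, z2_flip' hA hne h⟩
    · exact Or.inl ⟨hne, h⟩
  have hAsym : ∀ u w, r u w → ¬ r w u := by
    rintro u w ⟨hne, h1⟩ ⟨-, h2⟩
    have := hA u w hne
    rw [h1, h2] at this
    exact one_add_one_ne_one this
  have hTrans : ∀ u w x, r u w → r w x → r u x := by
    rintro u w x ⟨h1, h2⟩ ⟨h3, h4⟩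
    have hne : u ≠ x := by
      rintro rfl
      exact hAsym u w ⟨h1, h2⟩ ⟨h3, h4⟩
    exact ⟨hne, hT u w x h1 h3 hne h2 h4⟩
  set ρ : W → ℕ := fun v => (Finset.univ.filter (fun w => r w v)).card with hρ
  have hmono : ∀ u w, r u w → ρ u < ρ w := by
    intro u w huw
    apply Finset.card_lt_card
    constructor
    · intro x hx
      rw [Finset.mem_filter] at hx ⊢
      exact ⟨Finset.mem_univ x, hTrans x u w hx.2 huw⟩
    · intro hsub
      have : u ∈ Finset.univ.filter (fun w' => r w' u) := by
        apply hsub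
        rw [Finset.mem_filter]
        exact ⟨Finset.mem_univ u, huw⟩
      rw [Finset.mem_filter] at this
      exact this.2.1 rfl
  have hlt : ∀ v, ρ v < Fintype.card W := by
    intro v
    rw [← Finset.card_univ]
    apply Finset.card_lt_card
    refine (Finset.subset_univ _).ssubset_of_ne (fun h => ?_)
    have : v ∈ Finset.univ.filter (fun w => r w v) := by rw [h]; exact Finset.mem_univ v
    rw [Finset.mem_filter] at this
    exact this.2.1 rfl
  refine ⟨fun v => ⟨ρ v, hlt v⟩, ?_, ?_⟩
  · rw [Fintype.bijective_iff_injective_and_card]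
    refine ⟨?_, by simp⟩
    intro u w h
    by_contra hne
    have h' : ρ u = ρ w := by simpa [Fin.mk.injEq] using h
    rcases hTot u w hne with hr' | hr'
    · exact absurd h' (Nat.ne_of_lt (hmono _ _ hr'))
    · exact absurd h'.symm (Nat.ne_of_lt (hmono _ _ hr'))
  · intro u w
    constructor
    · intro h
      exact hmono u w h
    · intro h
      have hlt' : ρ u < ρ w := h
      have hne : u ≠ w := by
        rintro rfl
        exact lt_irrefl _ hlt'
      rcases hTot u w hne with hr' | hr'
      · exact hr'
      · exact absurd hlt' (lt_asymm (hmono _ _ hr'))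

lemma build {W : Type*} [Fintype W] [DecidableEq W] {G : SimpleGraph W}
    {β : W → W → ZMod 2} (hA : CondA β) (h1 : Tr β) (h2 : Tr (gam G β)) :
    IsPermutationGraph G := by
  obtain ⟨f1, hb1, hf1⟩ := linear_of hA h1
  obtain ⟨f2, hb2, hf2⟩ := linear_of (condA_gam (G := G) hA) h2
  let e1 := Equiv.ofBijective f1 hb1
  let e2 := Equiv.ofBijective f2 hb2
  refine ⟨Fintype.card W, e1.symm.trans e2, ⟨⟨e1, ?_⟩⟩⟩
  intro u v
  have he1 : ∀ x, e1 x = f1 x := fun x => rfl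
  have he2 : ∀ x, (e1.symm.trans e2) (e1 x) = f2 x := by
    intro x
    simp only [Equiv.trans_apply, Equiv.symm_apply_apply]
    rfl
  show ((e1 u < e1 v ∧ (e1.symm.trans e2) (e1 v) < (e1.symm.trans e2) (e1 u)) ∨
      (e1 v < e1 u ∧ (e1.symm.trans e2) (e1 u) < (e1.symm.trans e2) (e1 v))) ↔ G.Adj u v
  rw [he2, he2, he1, he1, ← hf1, ← hf1, ← hf2, ← hf2]
  constructor
  · rintro (⟨⟨hne, hb⟩, ⟨-, hg⟩⟩ | ⟨⟨hne, hb⟩, ⟨-, hg⟩⟩)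
    · by_cases h : G.Adj u v
      · exact h
      · exfalso
        rw [gam_not_adj (fun hh => h hh.symm)] at hg
        have := hA u v hne
        rw [hb, hg] at this
        exact one_add_one_ne_one this
    · by_cases h : G.Adj u v
      · exact h
      · exfalso
        rw [gam_not_adj h] at hg
        have := hA v u hne
        rw [hb, hg] at this
        exact one_add_one_ne_one this
  · intro hadj
    have hne := hadj.ne
    rcases z2_cases (β u v) with h | h
    · right
      have hvu : β v u = 1 := z2_flip' hA hne h
      exact ⟨⟨hne.symm, hvu⟩, ⟨hne, by rw [gam_adj hadj]; exact hvu⟩⟩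
    · left
      exact ⟨⟨hne, h⟩, ⟨hne.symm, by rw [gam_adj hadj.symm]; exact h⟩⟩

lemma order_helperB {n : ℕ} (π : Equiv.Perm (Fin n)) {i j k : Fin n}
    (hij : i ≠ j) (hik : i ≠ k) (hjk : j ≠ k)
    (h1 : ¬((i < j ∧ π j < π i) ∨ (j < i ∧ π i < π j)))
    (h2 : ¬((i < k ∧ π k < π i) ∨ (k < i ∧ π i < π k)))
    (h3 : (j < k ∧ π k < π j) ∨ (k < j ∧ π j < π k)) : (i < j ↔ i < k) := by
  push_neg at h1 h2
  rcases hij.lt_or_gt with hij' | hij'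
  · simp only [hij', true_iff]
    by_contra hik'
    have hki : k < i := (not_lt.mp hik').lt_of_ne hik.symm
    have hpij : π i < π j := (h1.1 hij').lt_of_ne (fun h => hij (π.injective h))
    have hpki : π k < π i := (h2.2 hki).lt_of_ne (fun h => hik (π.injective h).symm)
    rcases h3 with ⟨hjk', -⟩ | ⟨-, hpjk⟩
    · exact absurd (lt_trans (lt_trans hki hij') hjk') (lt_irrefl _)
    · exact absurd (lt_trans (lt_trans hpki hpij) hpjk) (lt_irrefl _)
  · have hji : ¬ i < j := not_lt.mpr hij'.le
    simp only [hji, false_iff]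
    intro hik'
    have hpji : π j < π i := (h1.2 hij').lt_of_ne (fun h => hij (π.injective h).symm)
    have hpik : π i < π k := (h2.1 hik').lt_of_ne (fun h => hik (π.injective h))
    rcases h3 with ⟨hjk', hpkj⟩ | ⟨hkj, -⟩
    · exact absurd (lt_trans (lt_trans hpji hpik) hpkj) (lt_irrefl _)
    · exact absurd (lt_trans (lt_trans hkj hij') hik') (lt_irrefl _)

lemma order_helperC {n : ℕ} (π : Equiv.Perm (Fin n)) {i j k : Fin n}
    (h1 : (i < j ∧ π j < π i) ∨ (j < i ∧ π i < π j))
    (h2 : (i < k ∧ π k < π i) ∨ (k < i ∧ π i < π k))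
    (h3 : ¬((j < k ∧ π k < π j) ∨ (k < j ∧ π j < π k))) : (i < j ↔ i < k) := by
  push_neg at h3
  rcases h1 with ⟨hij, hpji⟩ | ⟨hji, hpij⟩ <;> rcases h2 with ⟨hik, hpki⟩ | ⟨hki, hpik⟩
  · simp [hij, hik]
  · exfalso
    have hkj : k < j := lt_trans hki hij
    have hpjk : π j < π k := lt_trans hpji hpik
    exact absurd hpjk (not_lt.mpr (h3.2 hkj))
  · exfalso
    have hjk : j < k := lt_trans hji hik
    have hpkj : π k < π j := lt_trans hpki hpij
    exact absurd hpkj (not_lt.mpr (h3.1 hjk))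
  · simp [not_lt.mpr hji.le, not_lt.mpr hki.le]

lemma zif_add {p q : Prop} [Decidable p] [Decidable q] (h : p ↔ q) :
    ((if p then (1 : ZMod 2) else 0) + (if q then 1 else 0)) = 0 := by
  by_cases hp : p
  · rw [if_pos hp, if_pos (h.mp hp)]; decide
  · rw [if_neg hp, if_neg (fun hq => hp (h.mpr hq))]; decide

lemma perm_forward {W : Type*} {G : SimpleGraph W} (h : IsPermutationGraph G) :
    ∃ β : W → W → ZMod 2, Sol G β := by
  classical
  obtain ⟨n, π, ⟨φ⟩⟩ := h
  have hinj : Function.Injective φ := fun a b hh => φ.toEquiv.injective hh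
  have hadj : ∀ a b : W, G.Adj a b ↔
      ((φ a < φ b ∧ π (φ b) < π (φ a)) ∨ (φ b < φ a ∧ π (φ a) < π (φ b))) := by
    intro a b
    rw [← φ.map_rel_iff]
    exact Iff.rfl
  refine ⟨fun v w => if φ v < φ w then 1 else 0, ?_, ?_, ?_⟩
  · intro v w hne
    dsimp only
    have hne' : φ v ≠ φ w := fun hh => hne (hinj hh)
    rcases hne'.lt_or_gt with h' | h'
    · rw [if_pos h', if_neg (not_lt.mpr h'.le)]; decide
    · rw [if_neg (not_lt.mpr h'.le), if_pos h']; decide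
  · intro v w x hvw hvx hwx hnvw hnvx hawx
    rw [hadj] at hnvw hnvx hawx
    exact zif_add (order_helperB π (fun hh => hvw (hinj hh)) (fun hh => hvx (hinj hh))
      (fun hh => hwx (hinj hh)) hnvw hnvx hawx)
  · intro v w x hvw hvx hwx havw havx hnwx
    rw [hadj] at havw havx hnwx
    exact zif_add (order_helperC π havw havx hnwx)

end PGP

/-- Algebraic characterization of permutation graphs: `G` is a permutation graph iff the
system of equations (a), (b), (c) below has a solution over `GF(2)`. -/
theorem permutationGraph_iff {V : Type*} [Fintype V] [DecidableEq V]
    (G : SimpleGraph V) :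
    IsPermutationGraph G ↔
      ∃ β : V → V → ZMod 2,
        (∀ v w : V, v ≠ w → β v w + β w v = 1) ∧
        (∀ v w x : V, v ≠ w → v ≠ x → w ≠ x →
          ¬ G.Adj v w → ¬ G.Adj v x → G.Adj w x → β v w + β v x = 0) ∧
        (∀ v w x : V, v ≠ w → v ≠ x → w ≠ x →
          G.Adj v w → G.Adj v x → ¬ G.Adj w x → β v w + β v x = 0) := by
  constructor
  · intro h
    obtain ⟨β, hA, hB, hC⟩ := PGP.perm_forward h
    exact ⟨β, hA, hB, hC⟩
  · rintro ⟨β, hA, hB, hC⟩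
    obtain ⟨β', hA', h1, h2⟩ := PGP.key (Fintype.card V) G β le_rfl ⟨hA, hB, hC⟩
    exact PGP.build hA' h1 h2
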